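/- Let H be a finite group with generating set T, and let G = H ⋊ Z_2 with generating set S = (T × {e}) ∪ {(e_H, s)} where s generates Z_2. Then Player 1 has a winning strategy for RAV(G,S). -/

import Mathlib

namespace RelatorGames

variable {G : Type*} [Group G]

/-- The letters available in the relator games: elements of `S` and their inverses. -/
def letters (S : Set G) : Set G := S ∪ (fun g => g⁻¹) '' S

/-- Evaluate a history of moves (most recent letter first) to a group element:
the group element represented by the word built so far. -/
def eval (h : List G) : G := h.reverse.prod

/-- A move `m` is legal after history `h`: it is a letter of `S ∪ S⁻¹` and it is not
the inverse of the immediately preceding letter (no backtracking). -/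
def LegalMove (S : Set G) (h : List G) (m : G) : Prop :=
  m ∈ letters S ∧ ∀ p ∈ h.head?, m ≠ p⁻¹

/-- Appending `m` to the history `h` produces a word equal in `G` to some earlier
prefix of the word (equivalently, the walk in the Cayley graph revisits a vertex). -/
def ClosesCycle (h : List G) (m : G) : Prop :=
  ∃ t, t <:+ h ∧ eval t = eval (m :: h)

/-- A strategy: a choice of next letter given the history (most recent letter first). -/
abbrev Strategy (G : Type*) := List G → G

/-- The sequence of histories arising when the first player (moving at even steps)
uses `σ` and the second player (moving at odd steps) uses `τ`. -/
def hist (σ τ : Strategy G) : ℕ → List G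
  | 0 => []
  | k + 1 =>
      (if k % 2 = 0 then σ (hist σ τ k) else τ (hist σ τ k)) :: hist σ τ k

/-- The move made at step `k` in the play of `σ` against `τ`. -/
def moveAt (σ τ : Strategy G) (k : ℕ) : G :=
  if k % 2 = 0 then σ (hist σ τ k) else τ (hist σ τ k)

/-- Step `j` is uneventful: the move made is legal and does not close a cycle. -/
def Ok (S : Set G) (σ τ : Strategy G) (j : ℕ) : Prop :=
  LegalMove S (hist σ τ j) (moveAt σ τ j) ∧ ¬ ClosesCycle (hist σ τ j) (moveAt σ τ j)

/-- In the play of `σ` against `τ`, the player moving at steps congruent to `p` mod 2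
wins the relator achievement game `REL(G,S)`: at the first eventful step, either it is
that player's turn and they legally close a cycle, or it is the opponent's turn and the
opponent has made an illegal move (in particular, has no legal move). -/
def RelWins (S : Set G) (p : ℕ) (σ τ : Strategy G) : Prop :=
  ∃ k : ℕ, (∀ j < k, Ok S σ τ j) ∧
    ((k % 2 = p ∧ LegalMove S (hist σ τ k) (moveAt σ τ k) ∧
        ClosesCycle (hist σ τ k) (moveAt σ τ k)) ∨
      (k % 2 ≠ p ∧ ¬ LegalMove S (hist σ τ k) (moveAt σ τ k)))

/-- In the play of `σ` against `τ`, the player moving at steps congruent to `p` mod 2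
wins the relator avoidance game `RAV(G,S)`: at the first eventful step it is the
opponent's turn, and the opponent either makes an illegal move (in particular, has no
legal move) or closes a cycle. -/
def RavWins (S : Set G) (p : ℕ) (σ τ : Strategy G) : Prop :=
  ∃ k : ℕ, (∀ j < k, Ok S σ τ j) ∧ k % 2 ≠ p ∧
    (¬ LegalMove S (hist σ τ k) (moveAt σ τ k) ∨ ClosesCycle (hist σ τ k) (moveAt σ τ k))

/-- Player 1 has a winning strategy for `REL(G,S)`. -/
def FirstWinsREL (S : Set G) : Prop :=
  ∃ σ : Strategy G, ∀ τ : Strategy G, RelWins S 0 σ τ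

/-- Player 2 has a winning strategy for `REL(G,S)`. -/
def SecondWinsREL (S : Set G) : Prop :=
  ∃ τ : Strategy G, ∀ σ : Strategy G, RelWins S 1 σ τ

/-- Player 1 has a winning strategy for `RAV(G,S)`. -/
def FirstWinsRAV (S : Set G) : Prop :=
  ∃ σ : Strategy G, ∀ τ : Strategy G, RavWins S 0 σ τ

/-- Player 2 has a winning strategy for `RAV(G,S)`. -/
def SecondWinsRAV (S : Set G) : Prop :=
  ∃ τ : Strategy G, ∀ σ : Strategy G, RavWins S 1 σ τ

end RelatorGames

section Aux

open RelatorGames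

variable {G : Type*} [Group G]

lemma eval_cons (m : G) (h : List G) : eval (m :: h) = eval h * m := by
  simp [eval]

lemma hist_succ (σ τ : Strategy G) (k : ℕ) :
    hist σ τ (k + 1) = moveAt σ τ k :: hist σ τ k := rfl

lemma hist_suffix (σ τ : Strategy G) {j k : ℕ} (hjk : j ≤ k) :
    hist σ τ j <:+ hist σ τ k := by
  induction k with
  | zero => simp_all
  | succ k ih =>
    rcases Nat.lt_or_ge j (k + 1) with h | h
    · exact (ih (Nat.lt_succ_iff.mp h)).trans ⟨[moveAt σ τ k], rfl⟩
    · have : j = k + 1 := le_antisymm hjk h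
      subst this; exact List.suffix_refl _

lemma suffix_hist (σ τ : Strategy G) : ∀ k (l : List G), l <:+ hist σ τ k →
    ∃ j ≤ k, l = hist σ τ j := by
  intro k
  induction k with
  | zero => intro l hl; exact ⟨0, le_refl 0, List.suffix_nil.mp hl⟩
  | succ k ih =>
    intro l hl
    rw [hist_succ] at hl
    rcases List.suffix_cons_iff.mp hl with h | h
    · exact ⟨k + 1, le_refl _, by rw [hist_succ]; exact h⟩
    · obtain ⟨j, hj, rfl⟩ := ih l h
      exact ⟨j, hj.trans k.le_succ, rfl⟩

lemma closesCycle_iff (σ τ : Strategy G) (k : ℕ) (m : G) :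
    ClosesCycle (hist σ τ k) m ↔
      ∃ j ≤ k, eval (hist σ τ j) = eval (hist σ τ k) * m := by
  constructor
  · rintro ⟨l, hl, he⟩
    obtain ⟨j, hj, rfl⟩ := suffix_hist σ τ k l hl
    exact ⟨j, hj, by rwa [eval_cons] at he⟩
  · rintro ⟨j, hj, he⟩
    exact ⟨hist σ τ j, hist_suffix σ τ hj, by rwa [eval_cons]⟩

/-- If `S` contains an involution, Player 1 wins `RAV(G,S)` (for finite `G`). -/
theorem firstWinsRAV_of_involution [Finite G] {S : Set G} {t : G}
    (htS : t ∈ S) (ht2 : t * t = 1) (ht1 : t ≠ 1) : FirstWinsRAV S := by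
  classical
  refine ⟨fun _ => t, fun τ => ?_⟩
  set σ : Strategy G := (fun _ => t) with hσ
  -- abbreviation for the group elements visited
  set g : ℕ → G := fun j => eval (hist σ τ j) with hg
  have hmove_even : ∀ k, k % 2 = 0 → moveAt σ τ k = t := by
    intro k hk; simp [moveAt, hk, hσ]
  have hg_succ : ∀ k, g (k + 1) = g k * moveAt σ τ k := by
    intro k; simp [hg, hist_succ, eval_cons]
  -- distinctness from Ok steps
  have hdistinct : ∀ n, (∀ j < n, Ok S σ τ j) →
      ∀ i j, i < j → j ≤ n → g i ≠ g j := by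
    intro n hOk i j hij hjn
    obtain ⟨k, rfl⟩ : ∃ k, j = k + 1 := ⟨j - 1, by omega⟩
    have hk : Ok S σ τ k := hOk k (by omega)
    intro hgij
    refine hk.2 ((closesCycle_iff σ τ k (moveAt σ τ k)).mpr ⟨i, by omega, ?_⟩)
    show g i = g k * moveAt σ τ k
    exact hgij.trans (hg_succ k)
  -- Player 1's (even) steps are always Ok
  have heven_ok : ∀ n, n % 2 = 0 → (∀ j < n, Ok S σ τ j) → Ok S σ τ n := by
    intro n hn hOk
    have hmt : moveAt σ τ n = t := hmove_even n hn
    have hdist := hdistinct n hOk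
    constructor
    · constructor
      · exact Or.inl (hmt ▸ htS)
      · intro p hp hcontra
        -- head of history exists, so n = k + 1 with p = moveAt k
        obtain ⟨k, rfl⟩ : ∃ k, n = k + 1 := by
          cases n with
          | zero => simp [hist] at hp
          | succ k => exact ⟨k, rfl⟩
        rw [hist_succ] at hp
        simp only [List.head?_cons, Option.mem_def, Option.some.injEq] at hp
        subst hp
        -- hcontra : moveAt σ τ (k+1) = (moveAt σ τ k)⁻¹
        rw [hmt] at hcontra
        have htinv : t⁻¹ = t := by
          rw [eq_comm, eq_inv_iff_mul_eq_one, ht2]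
        have hmk : moveAt σ τ k = t := by
          rw [← inv_inv (moveAt σ τ k), ← hcontra]; exact htinv
        -- g (k+1) = g k * t, but k is odd? No: k could be anything.
        -- k % 2 = 1 since (k+1) % 2 = 0
        have hk1 : k % 2 = 1 := by omega
        -- k ≥ 1, and moveAt (k-1) = t as well (k-1 even)
        obtain ⟨i, rfl⟩ : ∃ i, k = i + 1 := ⟨k - 1, by omega⟩
        have hmi : moveAt σ τ i = t := hmove_even i (by omega)
        have : g (i + 1 + 1) = g i := by
          rw [hg_succ, hmk, hg_succ, hmi, mul_assoc, ht2, mul_one]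
        exact hdist i (i + 1 + 1) (by omega) (le_refl _) this.symm
    · -- does not close a cycle
      rw [hmt, closesCycle_iff]
      rintro ⟨j, hjn, hje⟩
      have hje' : g j = g n * t := hje
      clear hje
      rcases Nat.even_or_odd j with ⟨i, hi⟩ | ⟨i, hi⟩
      · subst hi
        rcases eq_or_lt_of_le hjn with h | h
        · -- j = n : g n = g n * t gives t = 1
          rw [h] at hje'
          exact ht1 (by rwa [left_eq_mul] at hje')
        · -- g (2i+1) = g (2i) * t = g n * t * t = g n
          have h1 : i + i < n := h
          have hm2i : moveAt σ τ (i + i) = t := hmove_even (i + i) (by omega)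
          have : g (i + i + 1) = g n := by
            rw [hg_succ, hm2i, hje', mul_assoc, ht2, mul_one]
          have hlt : i + i + 1 ≠ n := by omega
          rcases lt_or_gt_of_ne hlt with hc | hc
          · exact hdist (i + i + 1) n hc (le_refl _) this
          · omega
      · -- j odd : g j = g (j-1) * t, so g (j-1) = g n
        subst hi
        have hm2i : moveAt σ τ (2 * i) = t := hmove_even (2 * i) (by omega)
        have hj' : g (2 * i + 1) = g (2 * i) * t := by rw [hg_succ, hm2i]
        have : g (2 * i) = g n := by
          have := hj'.symm.trans hje'
          exact mul_right_cancel this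
        have hne : 2 * i < n := by omega
        exact hdist (2 * i) n hne (le_refl _) this
  -- termination: not all steps can be Ok
  have hterm : ¬ ∀ j, Ok S σ τ j := by
    intro hall
    have hinj : Function.Injective g := by
      intro a b hab
      by_contra hne
      rcases lt_or_gt_of_ne hne with h | h
      · exact hdistinct b (fun j _ => hall j) a b h (le_refl _) hab
      · exact hdistinct a (fun j _ => hall j) b a h (le_refl _) hab.symm
    exact Set.infinite_range_of_injective hinj (Set.toFinite _)
  -- take the minimal non-Ok step
  push_neg at hterm
  obtain ⟨k, hk⟩ := hterm
  have hex : ∃ k, ¬ Ok S σ τ k := ⟨k, hk⟩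
  classical
  set k₀ := Nat.find hex with hk₀
  have hk₀bad : ¬ Ok S σ τ k₀ := Nat.find_spec hex
  have hk₀min : ∀ j < k₀, Ok S σ τ j := fun j hj =>
    not_not.mp (Nat.find_min hex hj)
  have hk₀odd : k₀ % 2 ≠ 0 := by
    intro h; exact hk₀bad (heven_ok k₀ h hk₀min)
  refine ⟨k₀, hk₀min, hk₀odd, ?_⟩
  rw [Ok, not_and_or, not_not] at hk₀bad
  exact hk₀bad

end Aux

open RelatorGames in
/-- For `G = H ⋊ ℤ₂` with generating set
`S = (T × {e}) ∪ {(e_H, s)}`, Player 1 has a winning strategy for `RAV(G,S)`. -/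
theorem rav_semidirect_z2_first_wins {H : Type*} [Group H] [Finite H]
    (T : Set H) (hT : Subgroup.closure T = ⊤)
    (phi : Multiplicative (ZMod 2) →* MulAut H) :
    FirstWinsRAV
      ((SemidirectProduct.inl '' T ∪
          {SemidirectProduct.inr (Multiplicative.ofAdd (1 : ZMod 2))}) :
        Set (H ⋊[phi] Multiplicative (ZMod 2))) := by
  have hfin : Finite (H ⋊[phi] Multiplicative (ZMod 2)) := by
    apply Finite.of_injective
      (fun x : H ⋊[phi] Multiplicative (ZMod 2) => (x.left, x.right))
    intro a b hab
    simp only [Prod.mk.injEq] at hab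
    exact SemidirectProduct.ext hab.1 hab.2
  apply firstWinsRAV_of_involution
    (t := SemidirectProduct.inr (Multiplicative.ofAdd (1 : ZMod 2)))
  · exact Or.inr rfl
  · rw [← map_mul]
    have : (Multiplicative.ofAdd (1 : ZMod 2)) * (Multiplicative.ofAdd (1 : ZMod 2)) = 1 := by
      decide
    rw [this, map_one]
  · intro h
    have h2 : (Multiplicative.ofAdd (1 : ZMod 2)) = 1 := by
      refine SemidirectProduct.inr_injective (φ := phi) ?_
      rw [h, map_one]
    exact absurd h2 (by decide)
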